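/- If L is heavy-tailed and D is light-tailed, then L has a strict P-tail heavier than D (there exist z_0 and ε>0 with P[L>z] ≥ P[D>z]^ε for all z ≥ z_0); consequently E[T^R], E[T^C] < ∞. -/

import Mathlib

open MeasureTheory ProbabilityTheory Filter Set Real
open scoped ENNReal NNReal

/-- Helper: an `ℝ≥0∞`-valued sequence bounded by `1` and eventually dominated by a
summable real sequence has finite sum. -/
lemma tsum_lt_top_of_eventually_le {a : ℕ → ℝ≥0∞} {u : ℕ → ℝ} (hu : Summable u)
    (hu0 : ∀ i, 0 ≤ u i) (N : ℕ) (h1 : ∀ i, a i ≤ 1)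
    (h : ∀ i, N ≤ i → a i ≤ ENNReal.ofReal (u i)) : ∑' i, a i < ⊤ := by
  have hb : ∀ i, a i ≤ (fun j => if j < N then (1:ℝ≥0∞) else 0) i + ENNReal.ofReal (u i) := by
    intro i
    simp only
    by_cases hi : i < N
    · rw [if_pos hi]
      exact le_trans (h1 i) (le_add_of_nonneg_right bot_le)
    · rw [if_neg hi, zero_add]
      exact h i (not_lt.mp hi)
  calc ∑' i, a i ≤ ∑' i, ((fun j => if j < N then (1:ℝ≥0∞) else 0) i + ENNReal.ofReal (u i)) :=
        ENNReal.tsum_le_tsum hb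
    _ = (∑' i, (fun j => if j < N then (1:ℝ≥0∞) else 0) i) + ∑' i, ENNReal.ofReal (u i) :=
        ENNReal.tsum_add
    _ < ⊤ := by
        apply ENNReal.add_lt_top.mpr
        constructor
        · have : (∑' i, (fun j => if j < N then (1:ℝ≥0∞) else 0) i)
              = ∑ i ∈ Finset.range N, (if i < N then (1:ℝ≥0∞) else 0) := by
            apply tsum_eq_sum
            intro b hb
            simp only [Finset.mem_range, not_lt] at hb
            simp [Nat.not_lt.mpr hb]
          rw [this]
          exact lt_of_le_of_lt (Finset.sum_le_card_nsmul _ _ 1 (by intro x _; split <;> simp))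
            (by simp [lt_top_iff_ne_top])
        · rw [← ENNReal.ofReal_tsum_of_nonneg hu0 hu]
          exact ENNReal.ofReal_lt_top

lemma summable_aux : Summable (fun i : ℕ => ((i:ℝ)+1)^(-2:ℝ)) := by
  have := (summable_nat_rpow (p := -2)).2 (by norm_num)
  have h2 := this.comp_injective Nat.succ_injective
  refine h2.congr fun i => ?_
  simp [Function.comp, Nat.succ_eq_add_one]

set_option maxHeartbeats 2000000 in
/-- If `L` is heavy-tailed and `D` is light-tailed, then `L` has a
strict `P`-tail heavier than `D`; consequently `E[T^R], E[T^C] < ∞`. -/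
theorem restart_checkpoint_finite_of_light_heavy
    {Ω : Type*} [MeasurableSpace Ω] (P : Measure Ω) [IsProbabilityMeasure P]
    (D L0 : Ω → ℝ) (L : ℕ → Ω → ℝ)
    (hDmeas : Measurable D) (hL0meas : Measurable L0) (hLmeas : ∀ n, Measurable (L n))
    (hDnn : ∀ ω, 0 ≤ D ω) (hL0nn : ∀ ω, 0 ≤ L0 ω) (hLnn : ∀ n ω, 0 ≤ L n ω)
    (hDint : Integrable D P) (hL0int : Integrable L0 P)
    (hDsupp : ∀ x : ℝ, 0 ≤ x → 0 < P {ω | x < D ω})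
    (hLsupp : ∀ x : ℝ, 0 ≤ x → 0 < P {ω | x < L0 ω})
    (hid : ∀ n, IdentDistrib (L n) L0 P P)
    (hindep : @iIndepFun _ _ _ _ (fun _ : Option ℕ => (inferInstance : MeasurableSpace ℝ))
        (fun i => Option.elim i D L) P)
    (τ : Ω → ℕ) (hτ : ∀ ω, τ ω = sInf {k : ℕ | D ω < L k ω})
    (TR : Ω → ℝ) (hTR : ∀ ω, TR ω = (∑ i ∈ Finset.range (τ ω), L i ω) + D ω)
    (TC : Ω → ℝ) (hTC : ∀ ω, TC ω = ∑ i ∈ Finset.range (τ ω + 1), L i ω)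
    -- L is heavy-tailed
    (hheavy : ∀ γ : ℝ, 0 < γ →
        Tendsto (fun t : ℝ => exp (γ * t) * (P {ω | t < L0 ω}).toReal) atTop atTop)
    -- D is light-tailed
    (hlight : ∃ γ : ℝ, 0 < γ ∧ ∃ C : ℝ,
        ∀ᶠ t : ℝ in atTop, exp (γ * t) * (P {ω | t < D ω}).toReal ≤ C) :
    (∃ z₀ : ℝ, ∃ ε : ℝ, 0 < ε ∧
        ∀ z ≥ z₀, (P {ω | z < D ω}) ^ ε ≤ P {ω | z < L0 ω})
      ∧ ∫⁻ ω, ENNReal.ofReal (TR ω) ∂P < ⊤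
      ∧ ∫⁻ ω, ENNReal.ofReal (TC ω) ∂P < ⊤ := by
  classical
  obtain ⟨γ₀, hγ₀, C, hC⟩ := hlight
  obtain ⟨z₁, hz₁⟩ := eventually_atTop.mp hC
  set C0 : ℝ := max C 1 with hC0def
  have hC0pos : 0 < C0 := lt_of_lt_of_le one_pos (le_max_right _ _)
  -- light tail, clean form
  have hlightD : ∀ t : ℝ, z₁ ≤ t → (P {ω | t < D ω}).toReal ≤ C0 * exp (-(γ₀ * t)) := by
    intro s hs
    rw [Real.exp_neg, ← div_eq_mul_inv, le_div_iff₀ (exp_pos _)]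
    have h := hz₁ s hs
    have : C ≤ C0 := le_max_left _ _
    nlinarith
  -- heavy tail, clean form, for a given γ
  have hheavyL : ∀ γ : ℝ, 0 < γ → ∃ z₂ : ℝ, ∀ t : ℝ, z₂ ≤ t →
      C0 * exp (-(γ * t)) ≤ (P {ω | t < L0 ω}).toReal := by
    intro γ hγ
    obtain ⟨z₂, hz₂⟩ := eventually_atTop.mp ((hheavy γ hγ).eventually_ge_atTop C0)
    refine ⟨z₂, fun s hs => ?_⟩
    have h := hz₂ s hs
    rw [Real.exp_neg, ← div_eq_mul_inv, div_le_iff₀ (exp_pos _)]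
    nlinarith
  -- tails are finite measures
  have hfinD : ∀ t : ℝ, P {ω | t < D ω} ≠ ⊤ := fun t => measure_ne_top _ _
  have hfinL : ∀ t : ℝ, P {ω | t < L0 ω} ≠ ⊤ := fun t => measure_ne_top _ _
  -- Part 1: tail comparison with ε = 1
  have part1 : ∃ z₀ : ℝ, ∃ ε : ℝ, 0 < ε ∧
      ∀ z ≥ z₀, (P {ω | z < D ω}) ^ ε ≤ P {ω | z < L0 ω} := by
    obtain ⟨z₂, hz₂⟩ := hheavyL (γ₀ / 2) (by positivity)
    refine ⟨max (max z₁ z₂) 0, 1, one_pos, fun z hz => ?_⟩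
    have hz1 : z₁ ≤ z := le_trans (le_trans (le_max_left _ _) (le_max_left _ _)) hz
    have hz2 : z₂ ≤ z := le_trans (le_trans (le_max_right _ _) (le_max_left _ _)) hz
    have hz0 : (0:ℝ) ≤ z := le_trans (le_max_right _ _) hz
    rw [ENNReal.rpow_one]
    have h1 : (P {ω | z < D ω}).toReal ≤ (P {ω | z < L0 ω}).toReal := by
      refine le_trans (hlightD z hz1) (le_trans ?_ (hz₂ z hz2))
      have : exp (-(γ₀ * z)) ≤ exp (-(γ₀ / 2 * z)) := by
        apply exp_le_exp.mpr; nlinarith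
      nlinarith
    exact (ENNReal.toReal_le_toReal (hfinD z) (hfinL z)).mp h1
  -- mean of L0 in ℝ≥0∞
  set M : ℝ≥0∞ := ∫⁻ ω, ENNReal.ofReal (L0 ω) ∂P with hMdef
  have hMtop : M ≠ ⊤ := by
    have h2 := hL0int.2
    rw [HasFiniteIntegral] at h2
    refine ne_of_lt (lt_of_le_of_lt (lintegral_mono fun ω => ?_) h2)
    exact Real.ofReal_le_enorm (L0 ω)
  have hMi : ∀ i : ℕ, ∫⁻ ω, ENNReal.ofReal (L i ω) ∂P = M := by
    intro i
    exact ((hid i).comp ENNReal.measurable_ofReal).lintegral_eq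
  -- measurability of the family
  have hfam : ∀ o : Option ℕ, Measurable (Option.elim o D L) := by
    rintro (_ | n); exacts [hDmeas, hLmeas n]
  -- factorization lemma
  have hfact : ∀ (i : ℕ) (T : Finset (Option ℕ)), some i ∉ T →
      ∀ (B : Set (T → ℝ)), MeasurableSet B →
      ∫⁻ ω, ENNReal.ofReal (L i ω) *
        ((fun ω (j : T) => Option.elim (j : Option ℕ) D L ω) ⁻¹' B).indicator 1 ω ∂P
        = M * P ((fun ω (j : T) => Option.elim (j : Option ℕ) D L ω) ⁻¹' B) := by
    intro i T hT B hB
    set W : Ω → (T → ℝ) := fun ω (j : T) => Option.elim (j : Option ℕ) D L ω with hWdef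
    have hWmeas : Measurable W := measurable_pi_lambda _ (fun j => hfam j)
    have hdisj : Disjoint ({some i} : Finset (Option ℕ)) T := by
      simp [Finset.disjoint_left, hT]
    have h1 := hindep.indepFun_finset {some i} T hdisj hfam
    have hmem : (some i) ∈ ({some i} : Finset (Option ℕ)) := Finset.mem_singleton_self _
    have h2 : IndepFun (fun ω => ENNReal.ofReal (L i ω))
        (fun ω => B.indicator (1 : (T → ℝ) → ℝ≥0∞) (W ω)) P := by
      have := h1.comp
        (φ := fun x : ({some i} : Finset (Option ℕ)) → ℝ => ENNReal.ofReal (x ⟨some i, hmem⟩))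
        (ψ := fun x : T → ℝ => B.indicator (1 : (T → ℝ) → ℝ≥0∞) x)
        (ENNReal.measurable_ofReal.comp (measurable_pi_apply _))
        (measurable_one.indicator hB)
      exact this
    have heq : ∀ ω, ENNReal.ofReal (L i ω) * (W ⁻¹' B).indicator 1 ω
        = ENNReal.ofReal (L i ω) * B.indicator 1 (W ω) := by
      intro ω
      by_cases h : W ω ∈ B
      · simp only [Set.indicator_of_mem h, Set.indicator_of_mem (Set.mem_preimage.mpr h),
          Pi.one_apply]
      · simp only [Set.indicator_of_notMem h,
          Set.indicator_of_notMem (fun hc => h (Set.mem_preimage.mp hc))]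
    calc ∫⁻ ω, ENNReal.ofReal (L i ω) * (W ⁻¹' B).indicator 1 ω ∂P
        = ∫⁻ ω, ENNReal.ofReal (L i ω) * B.indicator 1 (W ω) ∂P := lintegral_congr heq
      _ = (∫⁻ ω, ENNReal.ofReal (L i ω) ∂P) * ∫⁻ ω, B.indicator 1 (W ω) ∂P :=
          lintegral_mul_eq_lintegral_mul_lintegral_of_indepFun''
            (((hLmeas i).ennreal_ofReal).aemeasurable)
            (((measurable_one.indicator hB).comp hWmeas).aemeasurable) h2
      _ = M * P (W ⁻¹' B) := by
          rw [hMi i]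
          congr 1
          have hfe : (fun ω => B.indicator (1 : (T → ℝ) → ℝ≥0∞) (W ω)) = (W ⁻¹' B).indicator 1 := by
            funext ω
            by_cases h : W ω ∈ B
            · simp only [Set.indicator_of_mem h, Set.indicator_of_mem (Set.mem_preimage.mpr h),
                Pi.one_apply]
            · simp only [Set.indicator_of_notMem h,
                Set.indicator_of_notMem (fun hc => h (Set.mem_preimage.mp hc))]
          rw [lintegral_congr (fun ω => congrFun hfe ω), lintegral_indicator_one (hWmeas hB)]
  -- the sequence of thresholds
  set c : ℝ := 2 / γ₀ with hcdef
  have hcpos : 0 < c := by positivity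
  set t : ℕ → ℝ := fun i => c * Real.log ((i:ℝ)+1) with htdef
  -- events
  set A1 : ℕ → Set Ω := fun i => D ⁻¹' (Ioi (t i)) with hA1def
  set A2 : ℕ → Set Ω := fun i => ⋂ j ∈ Finset.range i, L j ⁻¹' (Iic (t i)) with hA2def
  have hA1meas : ∀ i, MeasurableSet (A1 i) := fun i => hDmeas measurableSet_Ioi
  have hA2meas : ∀ i, MeasurableSet (A2 i) := by
    intro i
    exact MeasurableSet.biInter (Finset.range i).countable_toSet
      (fun j _ => (hLmeas j) measurableSet_Iic)
  -- the integral factorizations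
  have hI1 : ∀ i : ℕ, ∫⁻ ω, ENNReal.ofReal (L i ω) * (A1 i).indicator 1 ω ∂P = M * P (A1 i) := by
    intro i
    have hmem : (none : Option ℕ) ∈ ({none} : Finset (Option ℕ)) := Finset.mem_singleton_self _
    have hBmeas : MeasurableSet
        ((fun x : ({none} : Finset (Option ℕ)) → ℝ => x ⟨none, hmem⟩) ⁻¹' (Ioi (t i))) :=
      (measurable_pi_apply _) measurableSet_Ioi
    have h := hfact i {none} (by simp) _ hBmeas
    have hset : (fun ω (j : ({none} : Finset (Option ℕ))) => Option.elim (j : Option ℕ) D L ω) ⁻¹'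
        ((fun x : ({none} : Finset (Option ℕ)) → ℝ => x ⟨none, hmem⟩) ⁻¹' (Ioi (t i))) = A1 i := by
      ext ω; simp [hA1def]
    rw [hset] at h
    exact h
  have hI2 : ∀ i : ℕ, ∫⁻ ω, ENNReal.ofReal (L i ω) * (A2 i).indicator 1 ω ∂P = M * P (A2 i) := by
    intro i
    set T : Finset (Option ℕ) := (Finset.range i).image some with hTdef
    have hiT : some i ∉ T := by
      simp [hTdef, Finset.mem_image]
    have hBeq : {x : T → ℝ | ∀ j : T, x j ≤ t i}
        = ⋂ j : T, (fun x : T → ℝ => x j) ⁻¹' (Iic (t i)) := by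
      ext x; simp [Set.mem_iInter]
    have hBmeas : MeasurableSet {x : T → ℝ | ∀ j : T, x j ≤ t i} := by
      rw [hBeq]
      exact MeasurableSet.iInter (fun j => (measurable_pi_apply j) measurableSet_Iic)
    have h := hfact i T hiT _ hBmeas
    have hset : (fun ω (j : T) => Option.elim (j : Option ℕ) D L ω) ⁻¹'
        {x : T → ℝ | ∀ j : T, x j ≤ t i} = A2 i := by
      ext ω
      simp only [Set.mem_preimage, Set.mem_setOf_eq, hA2def, Set.mem_iInter, Subtype.forall,
        hTdef, Finset.mem_image, Finset.mem_range]
      constructor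
      · intro h j hj
        exact h (some j) ⟨j, hj, rfl⟩
      · rintro h o ⟨j, hj, rfl⟩
        exact h j hj
    rw [hset] at h
    exact h
  -- value of P (A2 i)
  have hPA2 : ∀ i : ℕ, P (A2 i) = (P (L0 ⁻¹' (Iic (t i)))) ^ i := by
    intro i
    have hq : ∀ j : ℕ, P (L j ⁻¹' (Iic (t i))) = P (L0 ⁻¹' (Iic (t i))) := by
      intro j
      rw [← Measure.map_apply (hLmeas j) measurableSet_Iic,
        ← Measure.map_apply hL0meas measurableSet_Iic, (hid j).map_eq]
    have h := hindep.measure_inter_preimage_eq_mul ((Finset.range i).image some)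
      (sets := fun _ => Iic (t i)) (fun o _ => measurableSet_Iic)
    have hLset : (⋂ o ∈ (Finset.range i).image some, (Option.elim o D L) ⁻¹' (Iic (t i)))
        = A2 i := by
      ext ω
      simp only [Set.mem_iInter, Finset.mem_image, Finset.mem_range, hA2def, Set.mem_preimage]
      constructor
      · intro h j hj
        exact h (some j) ⟨j, hj, rfl⟩
      · rintro h o ⟨j, hj, rfl⟩
        exact h j hj
    rw [← hLset]
    refine h.trans ?_
    refine (Finset.prod_image (fun x _ y _ hxy => Option.some_injective _ hxy)).trans ?_
    refine (Finset.prod_congr rfl (fun j _ => hq j)).trans ?_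
    rw [Finset.prod_const, Finset.card_range]
  -- pointwise bound on TC
  set f : ℕ → Ω → ℝ≥0∞ := fun i ω =>
    ENNReal.ofReal (L i ω) * (A1 i ∪ A2 i).indicator 1 ω with hfdef
  have hTCbound : ∀ ω, ENNReal.ofReal (TC ω) ≤ ∑' i, f i ω := by
    intro ω
    rw [hTC ω, ENNReal.ofReal_sum_of_nonneg (fun j _ => hLnn j ω)]
    have hmem : ∀ j ∈ Finset.range (τ ω + 1), ENNReal.ofReal (L j ω) = f j ω := by
      intro j hj
      rw [Finset.mem_range, Nat.lt_succ_iff] at hj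
      have hωmem : ω ∈ A1 j ∪ A2 j := by
        by_cases hD : t j < D ω
        · exact Or.inl hD
        · refine Or.inr ?_
          simp only [hA2def, Set.mem_iInter, Finset.mem_range, Set.mem_preimage, Set.mem_Iic]
          intro m hm
          have hnot : m ∉ {k : ℕ | D ω < L k ω} := by
            intro hmem2
            have h3 := Nat.sInf_le hmem2
            rw [← hτ ω] at h3
            omega
          exact le_trans (not_lt.mp hnot) (not_lt.mp hD)
      rw [hfdef]
      simp only [Set.indicator_of_mem hωmem, Pi.one_apply, mul_one]
    rw [Finset.sum_congr rfl hmem]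
    exact ENNReal.sum_le_tsum _
  have hfmeas : ∀ i, Measurable (f i) := by
    intro i
    exact ((hLmeas i).ennreal_ofReal).mul
      (measurable_one.indicator ((hA1meas i).union (hA2meas i)))
  -- integral of f i
  have hfint : ∀ i, ∫⁻ ω, f i ω ∂P ≤ M * P (A1 i) + M * P (A2 i) := by
    intro i
    have hpoint : ∀ ω, f i ω ≤ ENNReal.ofReal (L i ω) * (A1 i).indicator 1 ω
        + ENNReal.ofReal (L i ω) * (A2 i).indicator 1 ω := by
      intro ω
      rw [hfdef]
      simp only [← mul_add]
      apply mul_le_mul_right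
      by_cases h1 : ω ∈ A1 i
      · rw [Set.indicator_of_mem (Set.mem_union_left _ h1), Set.indicator_of_mem h1]
        exact le_add_of_nonneg_right bot_le
      by_cases h2 : ω ∈ A2 i
      · rw [Set.indicator_of_mem (Set.mem_union_right _ h2), Set.indicator_of_mem h2]
        exact le_add_of_nonneg_left bot_le
      · rw [Set.indicator_of_notMem (fun hc => hc.elim h1 h2)]
        exact bot_le
    calc ∫⁻ ω, f i ω ∂P
        ≤ ∫⁻ ω, (ENNReal.ofReal (L i ω) * (A1 i).indicator 1 ω
            + ENNReal.ofReal (L i ω) * (A2 i).indicator 1 ω) ∂P := lintegral_mono hpoint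
      _ = M * P (A1 i) + M * P (A2 i) := by
          rw [lintegral_add_left (f := fun ω => ENNReal.ofReal (L i ω) * (A1 i).indicator 1 ω) (((hLmeas i).ennreal_ofReal).mul
            (measurable_one.indicator (hA1meas i))), hI1 i, hI2 i]
  -- summability of the two series
  obtain ⟨z₂, hz₂⟩ := hheavyL (γ₀ / 4) (by positivity)
  obtain ⟨N, hN⟩ := exists_nat_gt (max (exp ((max z₁ z₂) / c)) 65536)
  have hNfacts : ∀ i : ℕ, N ≤ i → (max z₁ z₂ ≤ t i ∧ (65536:ℝ) ≤ (i:ℝ)+1) := by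
    intro i hi
    have hx : max (exp ((max z₁ z₂) / c)) 65536 ≤ (i:ℝ)+1 := by
      calc max (exp ((max z₁ z₂) / c)) 65536 ≤ (N:ℝ) := le_of_lt hN
        _ ≤ (i:ℝ) := Nat.cast_le.mpr hi
        _ ≤ (i:ℝ)+1 := by linarith
    constructor
    · have h1 : exp ((max z₁ z₂)/c) ≤ (i:ℝ)+1 := le_trans (le_max_left _ _) hx
      have h2 : (max z₁ z₂)/c ≤ Real.log ((i:ℝ)+1) := by
        rw [← Real.log_exp ((max z₁ z₂)/c)]
        exact Real.log_le_log (exp_pos _) h1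
      rw [div_le_iff₀ hcpos] at h2
      have : t i = c * Real.log ((i:ℝ)+1) := rfl
      rw [this]
      linarith
    · exact le_trans (le_max_right _ _) hx
  have hxpos : ∀ i : ℕ, (0:ℝ) < (i:ℝ)+1 := fun i => by positivity
  have hexp2 : ∀ i : ℕ, exp (-(γ₀ * t i)) = ((i:ℝ)+1) ^ (-2:ℝ) := by
    intro i
    rw [Real.rpow_def_of_pos (hxpos i)]
    congr 1
    have : t i = c * Real.log ((i:ℝ)+1) := rfl
    rw [this, hcdef]
    field_simp
  have hsum1 : ∑' i, P (A1 i) < ⊤ := by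
    apply tsum_lt_top_of_eventually_le
      (u := fun i => C0 * ((i:ℝ)+1)^(-2:ℝ)) (summable_aux.mul_left C0)
      (fun i => by positivity) N (fun i => prob_le_one)
    intro i hi
    have hz1i : z₁ ≤ t i := le_trans (le_max_left _ _) (hNfacts i hi).1
    have h2 := hlightD (t i) hz1i
    calc P (A1 i) = ENNReal.ofReal ((P (A1 i)).toReal) :=
          (ENNReal.ofReal_toReal (measure_ne_top _ _)).symm
      _ ≤ ENNReal.ofReal (C0 * ((i:ℝ)+1)^(-2:ℝ)) := by
          apply ENNReal.ofReal_le_ofReal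
          rw [← hexp2 i]
          exact h2
  have hsum2 : ∑' i, P (A2 i) < ⊤ := by
    apply tsum_lt_top_of_eventually_le (u := fun i => ((i:ℝ)+1)^(-2:ℝ)) summable_aux
      (fun i => by positivity) N
      (fun i => by rw [hPA2 i]; exact pow_le_one' prob_le_one i)
    intro i hi
    set x : ℝ := (i:ℝ)+1 with hxdef
    have hx0 : (0:ℝ) < x := hxpos i
    have hx65536 : (65536:ℝ) ≤ x := (hNfacts i hi).2
    have hz2i : z₂ ≤ t i := le_trans (le_max_right _ _) (hNfacts i hi).1
    set px : ℝ := (P {ω | t i < L0 ω}).toReal with hpxdef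
    have hpx1 : exp (-(γ₀/4 * t i)) ≤ px := by
      have h := hz₂ (t i) hz2i
      nlinarith [exp_pos (-(γ₀/4 * t i)), (le_max_right C 1 : (1:ℝ) ≤ C0)]
    have hexphalf : exp (-(γ₀/4 * t i)) = x ^ (-(1/2):ℝ) := by
      rw [Real.rpow_def_of_pos hx0]
      congr 1
      have ht : t i = c * Real.log x := rfl
      rw [ht, hcdef]
      field_simp
      ring
    have hpxhalf : x ^ (-(1/2):ℝ) ≤ px := hexphalf ▸ hpx1
    have hpx0 : 0 ≤ px := ENNReal.toReal_nonneg
    set q : ℝ≥0∞ := P (L0 ⁻¹' (Iic (t i))) with hqdef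
    set F : ℝ := q.toReal with hFdef
    have hF0 : 0 ≤ F := ENNReal.toReal_nonneg
    have hcompl : L0 ⁻¹' (Iic (t i)) = {ω | t i < L0 ω}ᶜ := by
      ext ω; simp [not_lt]
    have hsumev : P {ω | t i < L0 ω} + P ({ω | t i < L0 ω}ᶜ) = 1 := by
      rw [measure_add_measure_compl (measurableSet_lt measurable_const hL0meas), measure_univ]
    have hFpx : F + px = 1 := by
      rw [hFdef, hqdef, hcompl, hpxdef,
        ← ENNReal.toReal_add (measure_ne_top _ _) (measure_ne_top _ _), add_comm,
        hsumev, ENNReal.toReal_one]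
    -- key inequality
    have hia : (i:ℝ) = x - 1 := by rw [hxdef]; ring
    have e2 : x ^ (-(1/2):ℝ) * x ^ ((1:ℝ)/2) = 1 := by
      rw [← Real.rpow_add hx0]; norm_num
    have e3 : x ^ ((1:ℝ)/4) * x ^ ((3:ℝ)/4) = x := by
      rw [← Real.rpow_add hx0]; norm_num
    have e5 : x ^ ((3:ℝ)/4) * x ^ (-(1/2):ℝ) = x ^ ((1:ℝ)/4) := by
      rw [← Real.rpow_add hx0]; norm_num
    have hp34 : (0:ℝ) < x ^ ((3:ℝ)/4) := Real.rpow_pos_of_pos hx0 _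
    have hx14 : (16:ℝ) ≤ x ^ ((1:ℝ)/4) := by
      have h := Real.rpow_le_rpow (by norm_num : (0:ℝ) ≤ 65536) hx65536
        (by norm_num : (0:ℝ) ≤ (1:ℝ)/4)
      calc (16:ℝ) = (65536:ℝ) ^ ((1:ℝ)/4) := by
            rw [show (65536:ℝ) = 16 ^ (4:ℕ) by norm_num, ← Real.rpow_natCast 16 4,
              ← Real.rpow_mul (by norm_num)]
            norm_num
        _ ≤ x ^ ((1:ℝ)/4) := h
    have hlog : Real.log x ≤ x ^ ((1:ℝ)/4) / ((1:ℝ)/4) :=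
      Real.log_le_rpow_div hx0.le (by norm_num)
    have h16 : 16 * x ^ ((3:ℝ)/4) ≤ x := by nlinarith
    have h8 : 8 * x ^ ((3:ℝ)/4) ≤ x - 1 := by linarith
    have hmid : 8 * x ^ ((1:ℝ)/4) ≤ (x-1) * x ^ (-(1/2):ℝ) := by
      have hmul := mul_le_mul_of_nonneg_right h8 (Real.rpow_pos_of_pos hx0 (-(1/2):ℝ)).le
      calc 8 * x ^ ((1:ℝ)/4) = 8 * x ^ ((3:ℝ)/4) * x ^ (-(1/2):ℝ) := by
            rw [mul_assoc, e5]
        _ ≤ (x-1) * x ^ (-(1/2):ℝ) := hmul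
    have hkey : 2 * Real.log x ≤ (i:ℝ) * px := by
      calc 2 * Real.log x ≤ 8 * x ^ ((1:ℝ)/4) := by linarith
        _ ≤ (x-1) * x ^ (-(1/2):ℝ) := hmid
        _ ≤ (i:ℝ) * px := by
            rw [hia]
            exact mul_le_mul_of_nonneg_left hpxhalf (by linarith)
    -- conclude
    have hFexp : F ≤ exp (-px) := by
      have := Real.add_one_le_exp (-px)
      linarith
    have hchain : F ^ i ≤ x ^ (-2:ℝ) := by
      calc F ^ i ≤ exp (-px) ^ i := pow_le_pow_left₀ hF0 hFexp i
        _ = exp ((i:ℝ) * (-px)) := (Real.exp_nat_mul (-px) i).symm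
        _ ≤ exp (Real.log x * (-2)) := by
            apply exp_le_exp.mpr
            linarith
        _ = x ^ (-2:ℝ) := (Real.rpow_def_of_pos hx0 (-2)).symm
    calc P (A2 i) = q ^ i := hPA2 i
      _ = (ENNReal.ofReal F) ^ i := by rw [hFdef, ENNReal.ofReal_toReal (measure_ne_top _ _)]
      _ = ENNReal.ofReal (F ^ i) := by rw [ENNReal.ofReal_pow hF0]
      _ ≤ ENNReal.ofReal (x ^ (-2:ℝ)) := ENNReal.ofReal_le_ofReal hchain
  -- finiteness of E[TC]
  have hTCfin : ∫⁻ ω, ENNReal.ofReal (TC ω) ∂P < ⊤ := by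
    calc ∫⁻ ω, ENNReal.ofReal (TC ω) ∂P ≤ ∫⁻ ω, ∑' i, f i ω ∂P := lintegral_mono hTCbound
      _ = ∑' i, ∫⁻ ω, f i ω ∂P := lintegral_tsum (fun i => (hfmeas i).aemeasurable)
      _ ≤ ∑' i, (M * P (A1 i) + M * P (A2 i)) := ENNReal.tsum_le_tsum hfint
      _ = M * ∑' i, P (A1 i) + M * ∑' i, P (A2 i) := by
          rw [ENNReal.tsum_add, ENNReal.tsum_mul_left, ENNReal.tsum_mul_left]
      _ < ⊤ := by
          apply ENNReal.add_lt_top.mpr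
          exact ⟨ENNReal.mul_lt_top hMtop.lt_top hsum1,
                 ENNReal.mul_lt_top hMtop.lt_top hsum2⟩
  -- finiteness of E[TR]
  have hTRfin : ∫⁻ ω, ENNReal.ofReal (TR ω) ∂P < ⊤ := by
    have hpt : ∀ ω, TR ω ≤ TC ω + D ω := by
      intro ω
      rw [hTR ω, hTC ω]
      by_cases hS : {k : ℕ | D ω < L k ω}.Nonempty
      · have hmem := Nat.sInf_mem hS
        rw [← hτ ω] at hmem
        have hDlt : D ω < L (τ ω) ω := hmem
        rw [Finset.sum_range_succ]
        linarith [hDnn ω]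
      · have hτ0 : τ ω = 0 := by
          rw [hτ ω, Set.not_nonempty_iff_eq_empty.mp hS]
          exact Nat.sInf_empty
        rw [hτ0]
        simp only [Finset.range_zero, Finset.sum_empty, zero_add, Finset.range_one,
          Finset.sum_singleton]
        linarith [hLnn 0 ω]
    have hDfin : ∫⁻ ω, ENNReal.ofReal (D ω) ∂P < ⊤ := by
      have h2 := hDint.2
      rw [HasFiniteIntegral] at h2
      exact lt_of_le_of_lt (lintegral_mono fun ω => Real.ofReal_le_enorm (D ω)) h2
    calc ∫⁻ ω, ENNReal.ofReal (TR ω) ∂P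
        ≤ ∫⁻ ω, (ENNReal.ofReal (TC ω) + ENNReal.ofReal (D ω)) ∂P :=
          lintegral_mono fun ω =>
            le_trans (ENNReal.ofReal_le_ofReal (hpt ω)) ENNReal.ofReal_add_le
      _ = (∫⁻ ω, ENNReal.ofReal (TC ω) ∂P) + ∫⁻ ω, ENNReal.ofReal (D ω) ∂P :=
          lintegral_add_right _ hDmeas.ennreal_ofReal
      _ < ⊤ := ENNReal.add_lt_top.mpr ⟨hTCfin, hDfin⟩
  exact ⟨part1, hTRfin, hTCfin⟩
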